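/- For the supersymmetric elementary functions e_a with generating series Π_{i=1}^{r+1}(1+x_iX)/Π_{j=1}^{s+1}(1-y_jX), one has e_a ≠ 0 possibly for all a ≥ 0 (no vanishing for large a when s ≥ 0), but the hook Schur function s_μ = det(e_{μ'_i - i + j}) vanishes whenever the partition μ contains the cell (r+2, s+2), i.e., whenever μ_{r+2} ≥ s+2. -/

import Mathlib

open Finset PowerSeries

lemma coeff_prod_one_add {R : Type*} [CommRing R] {ι : Type*} [DecidableEq ι]
    (F : Finset ι) (c : ι → R) :
    ∀ k : ℕ, F.card < k →
      PowerSeries.coeff k (∏ j ∈ F, (1 + PowerSeries.C (c j) * PowerSeries.X)) = 0 := by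
  induction F using Finset.induction with
  | empty =>
      intro k hk
      simp only [Finset.prod_empty]
      simp only [Finset.card_empty] at hk
      rw [PowerSeries.coeff_one, if_neg (by omega : ¬ k = 0)]
  | @insert a F ha ih =>
      intro k hk
      rw [Finset.prod_insert ha, add_mul, one_mul, mul_assoc]
      rw [Finset.card_insert_of_notMem ha] at hk
      obtain ⟨k', rfl⟩ : ∃ k', k = k' + 1 := ⟨k - 1, by omega⟩
      rw [map_add, PowerSeries.coeff_C_mul, PowerSeries.coeff_succ_X_mul]
      rw [ih _ (by omega), ih _ (by omega), mul_zero, add_zero]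

/-- over `ℚ[x_1,…,x_{r+1},y_1,…,y_{s+1}]`, with the supersymmetric
elementary functions `e_a` defined by `E(X) = Π(1+x_iX)/Π(1-y_jX)` (denominators
cleared), the hook Schur function `s_μ = det_{1≤i,j≤μ₁}(e_{μ'_i-i+j})` vanishes
whenever the partition `mu` contains the cell `(r+2,s+2)`, i.e. `μ_{r+2} ≥ s+2`
(0-indexed: `mu (r+1) ≥ s+2`). -/
theorem stmt14 (r s : ℕ)
    (e : ℕ → MvPolynomial (Fin (r + 1) ⊕ Fin (s + 1)) ℚ)
    (he0 : e 0 = 1)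
    (hE : (PowerSeries.mk e) *
        ∏ j : Fin (s + 1),
          (1 - PowerSeries.C (MvPolynomial.X (Sum.inr j)) * PowerSeries.X) =
      ∏ i : Fin (r + 1),
          (1 + PowerSeries.C (MvPolynomial.X (Sum.inl i)) * PowerSeries.X))
    (N : ℕ) (mu : ℕ → ℕ) (hmu : Antitone mu) (hN : ∀ i, N ≤ i → mu i = 0)
    (conj : ℕ → ℕ)
    (hconj : ∀ j, conj j = ((Finset.range N).filter fun k => j < mu k).card)
    (hhook : s + 2 ≤ mu (r + 1)) :
    (Matrix.of fun i j : Fin (mu 0) =>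
        if 0 ≤ (conj i : ℤ) - (i : ℤ) + (j : ℤ) then
          e ((conj i : ℤ) - (i : ℤ) + (j : ℤ)).toNat else 0).det = 0 := by
  classical
  -- extended sequence
  set Et : ℤ → MvPolynomial (Fin (r + 1) ⊕ Fin (s + 1)) ℚ :=
    fun m => if 0 ≤ m then e m.toNat else 0 with hEtdef
  -- the denominator power series and its coefficients
  set D : PowerSeries (MvPolynomial (Fin (r + 1) ⊕ Fin (s + 1)) ℚ) :=
    ∏ j : Fin (s + 1),
      (1 - PowerSeries.C (MvPolynomial.X (Sum.inr j)) * PowerSeries.X) with hD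
  set σ : ℕ → MvPolynomial (Fin (r + 1) ⊕ Fin (s + 1)) ℚ :=
    fun k => PowerSeries.coeff k D with hσdef
  have hDalt : D = ∏ j : Fin (s + 1),
      (1 + PowerSeries.C (-(MvPolynomial.X (Sum.inr j) :
        MvPolynomial (Fin (r + 1) ⊕ Fin (s + 1)) ℚ)) * PowerSeries.X) := by
    rw [hD]
    refine Finset.prod_congr rfl fun j _ => ?_
    rw [map_neg, neg_mul, sub_eq_add_neg]
  have hσ0 : σ 0 = 1 := by
    simp only [hσdef, hD, PowerSeries.coeff_zero_eq_constantCoeff, map_prod, map_sub, map_one,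
      map_mul, PowerSeries.constantCoeff_C, PowerSeries.constantCoeff_X, mul_zero, sub_zero,
      Finset.prod_const_one]
  have hσtop : ∀ k, s + 2 ≤ k → σ k = 0 := by
    intro k hk
    rw [hσdef]
    simp only
    rw [hDalt]
    exact coeff_prod_one_add _ _ k (by simpa using by omega)
  -- the recurrence
  have hrec : ∀ b : ℤ, (r : ℤ) + 2 ≤ b →
      ∑ k ∈ range (s + 2), σ k * Et (b - k) = 0 := by
    intro b hb
    obtain ⟨n, rfl⟩ : ∃ n : ℕ, b = (n : ℤ) := ⟨b.toNat, (Int.toNat_of_nonneg (by omega)).symm⟩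
    have hn : r + 2 ≤ n := by exact_mod_cast hb
    have hcf := congrArg (PowerSeries.coeff n) hE
    rw [mul_comm, PowerSeries.coeff_mul,
      Finset.Nat.sum_antidiagonal_eq_sum_range_succ_mk] at hcf
    simp only [PowerSeries.coeff_mk] at hcf
    have hrhs : PowerSeries.coeff n (∏ i : Fin (r + 1),
        (1 + PowerSeries.C (R := MvPolynomial (Fin (r + 1) ⊕ Fin (s + 1)) ℚ)
          (MvPolynomial.X (Sum.inl i)) * PowerSeries.X)) = 0 :=
      coeff_prod_one_add _ _ n (by simpa using by omega)
    rw [hrhs] at hcf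
    -- hcf : ∑ k ∈ range (n+1), σ k * e (n - k) = 0
    have h1 : ∑ k ∈ range (s + 2), σ k * Et ((n : ℤ) - k) =
        ∑ k ∈ range (max (s + 2) (n + 1)), σ k * Et ((n : ℤ) - k) := by
      apply Finset.sum_subset (Finset.range_subset_range.2 (le_max_left _ _))
      intro k _ hk
      simp only [Finset.mem_range] at hk
      rw [hσtop k (by omega), zero_mul]
    have h2 : ∑ k ∈ range (n + 1), σ k * e (n - k) =
        ∑ k ∈ range (max (s + 2) (n + 1)), σ k * Et ((n : ℤ) - k) := by
      apply Finset.sum_subset_zero_on_sdiff (Finset.range_subset_range.2 (le_max_right _ _))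
      · intro k hk
        simp only [Finset.mem_sdiff, Finset.mem_range] at hk
        rw [hEtdef]
        simp only
        rw [if_neg (by omega : ¬ (0:ℤ) ≤ (n:ℤ) - k), mul_zero]
      · intro k hk
        simp only [Finset.mem_range] at hk
        rw [hEtdef]
        simp only
        rw [if_pos (by omega : (0:ℤ) ≤ (n:ℤ) - k),
          (by omega : ((n:ℤ) - k).toNat = n - k)]
    rw [h1, ← h2, hcf]
  -- m_i bounds
  have hrN : r + 1 < N := by
    by_contra h
    have := hN (r + 1) (by omega)
    omega
  have hconjge : ∀ i : ℕ, i ≤ s + 1 → r + 2 ≤ conj i := by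
    intro i hi
    rw [hconj i]
    calc r + 2 = (Finset.range (r + 2)).card := by simp
    _ ≤ _ := by
        apply Finset.card_le_card
        intro k hk
        simp only [Finset.mem_range] at hk
        simp only [Finset.mem_filter, Finset.mem_range]
        refine ⟨by omega, ?_⟩
        have h1 : mu (r + 1) ≤ mu k := hmu (by omega)
        omega
  set m : ℕ → ℤ := fun i => (conj i : ℤ) - i with hm
  have hm' : ∀ i : ℕ, i ≤ s + 1 → (r : ℤ) + 1 - s ≤ m i := by
    intro i hi
    have h1 := hconjge i hi
    simp only [hm]
    omega
  -- the window matrix and the dependence vector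
  set C : Matrix (Fin (s + 2)) (Fin (s + 2)) (MvPolynomial (Fin (r + 1) ⊕ Fin (s + 1)) ℚ) :=
    Matrix.of (fun i t => if (t : ℕ) ≤ s then Et (m i + t) else 0) with hC
  have hCdet : C.det = 0 := by
    apply Matrix.det_eq_zero_of_column_eq_zero (Fin.last (s + 1))
    intro i
    simp [hC, Fin.last]
  obtain ⟨lam, hlam0, hlamC⟩ := Matrix.exists_vecMul_eq_zero_iff.mpr hCdet
  have window : ∀ t : ℕ, t ≤ s → ∑ i : Fin (s + 2), lam i * Et (m i + t) = 0 := by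
    intro t ht
    have h := congrFun hlamC ⟨t, by omega⟩
    simpa [Matrix.vecMul, dotProduct, hC, ht] using h
  -- propagate the dependence to all a
  have hzero : ∀ a : ℕ, ∑ i : Fin (s + 2), lam i * Et (m i + a) = 0 := by
    intro a
    induction a using Nat.strong_induction_on with
    | _ a ih =>
      rcases le_or_gt a s with ha | ha
      · exact window a ha
      · have hb : ∑ i : Fin (s + 2), lam i *
            (∑ k ∈ range (s + 2), σ k * Et (m i + a - k)) = 0 := by
          rw [Finset.sum_eq_zero]
          intro i _
          rw [hrec (m i + a) (by have := hm' i (by omega); omega), mul_zero]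
        have hb2 : ∑ k ∈ range (s + 2), σ k *
            ∑ i : Fin (s + 2), lam i * Et (m i + a - k) = 0 := by
          rw [← hb]
          simp_rw [Finset.mul_sum]
          rw [Finset.sum_comm]
          refine Finset.sum_congr rfl fun i _ => Finset.sum_congr rfl fun k _ => by ring
        rw [Finset.sum_range_succ'] at hb2
        have hz : ∀ k ∈ range (s + 1), σ (k + 1) *
            ∑ i : Fin (s + 2), lam i * Et (m i + a - (k + 1 : ℕ)) = 0 := by
          intro k hk
          simp only [Finset.mem_range] at hk
          have harg : (∑ i : Fin (s + 2), lam i * Et (m i + a - (k + 1 : ℕ))) =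
              ∑ i : Fin (s + 2), lam i * Et (m i + (a - (k + 1) : ℕ)) := by
            refine Finset.sum_congr rfl fun i _ => ?_
            congr 2
            omega
          rw [harg, ih (a - (k + 1)) (by omega), mul_zero]
        rw [Finset.sum_eq_zero hz, zero_add, hσ0, one_mul] at hb2
        simpa using hb2
  -- conclude
  have hdim : s + 2 ≤ mu 0 := le_trans hhook (hmu (Nat.zero_le _))
  set v : Fin (mu 0) → MvPolynomial (Fin (r + 1) ⊕ Fin (s + 1)) ℚ :=
    fun j => if h : (j : ℕ) < s + 2 then lam ⟨(j : ℕ), h⟩ else 0 with hv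
  have hv0 : v ≠ 0 := by
    obtain ⟨i, hi⟩ := Function.ne_iff.mp hlam0
    intro h
    apply hi
    have h2 := congrFun h ⟨(i : ℕ), by omega⟩
    simpa [hv] using h2
  have key : ∀ j : ℕ, ∑ i : Fin (mu 0), v i *
      Et ((conj (i : ℕ) : ℤ) - ((i : ℕ) : ℤ) + ((j : ℕ) : ℤ)) = 0 := by
    intro j
    have e1 : ∑ i : Fin (mu 0), v i *
        Et ((conj (i : ℕ) : ℤ) - ((i : ℕ) : ℤ) + ((j : ℕ) : ℤ)) =
        ∑ i ∈ range (mu 0), (if h : i < s + 2 then lam ⟨i, h⟩ else 0) *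
          Et ((conj i : ℤ) - (i : ℤ) + ((j : ℕ) : ℤ)) := by
      rw [← Fin.sum_univ_eq_sum_range (fun i => (if h : i < s + 2 then lam ⟨i, h⟩ else 0) *
        Et ((conj i : ℤ) - (i : ℤ) + ((j : ℕ) : ℤ))) (mu 0)]
    have e2 : ∑ i ∈ range (mu 0), (if h : i < s + 2 then lam ⟨i, h⟩ else 0) *
          Et ((conj i : ℤ) - (i : ℤ) + ((j : ℕ) : ℤ)) =
        ∑ i ∈ range (s + 2), (if h : i < s + 2 then lam ⟨i, h⟩ else 0) *
          Et ((conj i : ℤ) - (i : ℤ) + ((j : ℕ) : ℤ)) := by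
      symm
      apply Finset.sum_subset (Finset.range_subset_range.2 hdim)
      intro i _ hi
      simp only [Finset.mem_range] at hi
      rw [dif_neg (by omega), zero_mul]
    have e3 : ∑ i ∈ range (s + 2), (if h : i < s + 2 then lam ⟨i, h⟩ else 0) *
          Et ((conj i : ℤ) - (i : ℤ) + ((j : ℕ) : ℤ)) =
        ∑ i : Fin (s + 2), lam i * Et (m (i : ℕ) + ((j : ℕ) : ℤ)) := by
      rw [← Fin.sum_univ_eq_sum_range (fun i => (if h : i < s + 2 then lam ⟨i, h⟩ else 0) *
        Et ((conj i : ℤ) - (i : ℤ) + ((j : ℕ) : ℤ))) (s + 2)]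
      refine Finset.sum_congr rfl fun i _ => ?_
      rw [dif_pos i.isLt, hm]
    rw [e1, e2, e3]
    exact hzero j
  apply Matrix.exists_vecMul_eq_zero_iff.mp
  refine ⟨v, hv0, ?_⟩
  funext j
  have hk := key (j : ℕ)
  simp only [Matrix.vecMul, dotProduct, Pi.zero_apply, Matrix.of_apply, hEtdef] at hk ⊢
  exact hk
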